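/- Let K be a closed subspace of ℝ^n, Ω' a nonempty closed convex subset of an affine subspace x₀ + K, g ∈ ℝ^n, and let g^A denote the orthogonal projection of g onto K. Then for every α ≥ 0 and every point x ∈ x₀ + K, the projection of x - α • g onto Ω' equals the projection of x - α • g^A onto Ω'. -/

import Mathlib

open RealInnerProductSpace

-- Uniqueness of the metric projection onto a convex set
lemma proj_unique {E : Type*} [NormedAddCommGroup E] [InnerProductSpace ℝ E]
    {Ω : Set E} (hconv : Convex ℝ Ω) {z p q : E}
    (hp : p ∈ Ω) (hq : q ∈ Ω)
    (hpmin : ∀ y ∈ Ω, ‖z - p‖ ≤ ‖z - y‖)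
    (hqmin : ∀ y ∈ Ω, ‖z - q‖ ≤ ‖z - y‖) : p = q := by
  set m := (1/2:ℝ) • p + (1/2:ℝ) • q with hmdef
  have hm : m ∈ Ω := hconv hp hq (by norm_num) (by norm_num) (by norm_num)
  have h1 := hpmin _ hm
  have h2 := hqmin _ hm
  have hpar := parallelogram_law_with_norm ℝ (z - p) (z - q)
  have hsum : (z - p) + (z - q) = (2 : ℝ) • (z - m) := by
    rw [hmdef]; module
  have hdiff : (z - p) - (z - q) = q - p := by abel
  rw [hsum, hdiff, norm_smul] at hpar
  have hz : ‖q - p‖ = 0 := by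
    have : ‖q - p‖ ^ 2 ≤ 0 := by
      simp only [Real.norm_ofNat] at hpar
      nlinarith [norm_nonneg (q - p), norm_nonneg (z - m),
        norm_nonneg (z - p), norm_nonneg (z - q)]
    nlinarith [norm_nonneg (q - p)]
  exact (sub_eq_zero.mp (norm_eq_zero.mp hz)).symm

theorem projection_eq_of_projected_gradient {n : ℕ}
    (K : Submodule ℝ (EuclideanSpace ℝ (Fin n)))
    (x₀ : EuclideanSpace ℝ (Fin n))
    (Ω' : Set (EuclideanSpace ℝ (Fin n)))
    (hΩne : Ω'.Nonempty) (hΩcl : IsClosed Ω') (hΩconv : Convex ℝ Ω')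
    (hΩaff : ∀ y ∈ Ω', y - x₀ ∈ K)
    (P' : EuclideanSpace ℝ (Fin n) → EuclideanSpace ℝ (Fin n))
    (hP' : ∀ x, P' x ∈ Ω' ∧ ∀ y ∈ Ω', ‖x - P' x‖ ≤ ‖x - y‖)
    (g : EuclideanSpace ℝ (Fin n)) (α : ℝ) (hα : 0 ≤ α)
    (x : EuclideanSpace ℝ (Fin n)) (hx : x - x₀ ∈ K) :
    P' (x - α • g) =
      P' (x - α • (K.orthogonalProjection g : EuclideanSpace ℝ (Fin n))) := by
  set gA : EuclideanSpace ℝ (Fin n) := (K.orthogonalProjection g : EuclideanSpace ℝ (Fin n))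
  set z1 := x - α • g
  set z2 := x - α • gA
  -- Pythagorean identity for any y ∈ Ω'
  have key : ∀ y ∈ Ω', ‖z1 - y‖ ^ 2 = ‖z2 - y‖ ^ 2 + ‖α • (g - gA)‖ ^ 2 := by
    intro y hy
    have hKy : z2 - y ∈ K := by
      have : z2 - y = (x - x₀) - (y - x₀) - α • gA := by
        simp only [z2]; module
      rw [this]
      exact K.sub_mem (K.sub_mem hx (hΩaff y hy)) (K.smul_mem _ (K.orthogonalProjection g).2)
    have hperp : g - gA ∈ Kᗮ := K.sub_starProjection_mem_orthogonal g
    have hinner : ⟪z2 - y, α • (g - gA)⟫ = 0 := by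
      rw [real_inner_smul_right, hperp (z2 - y) hKy, mul_zero]
    have hdecomp : z1 - y = (z2 - y) - α • (g - gA) := by
      simp only [z1, z2, smul_sub]
      module
    rw [hdecomp, norm_sub_sq_real, hinner]
    ring
  have h1 := hP' z1
  have h2 := hP' z2
  -- P' z1 also minimizes distance from z2
  have hmin : ∀ y ∈ Ω', ‖z2 - P' z1‖ ≤ ‖z2 - y‖ := by
    intro y hy
    have e1 := key _ h1.1
    have e2 := key y hy
    have h3 := h1.2 y hy
    nlinarith [norm_nonneg (z2 - P' z1), norm_nonneg (z2 - y),
      norm_nonneg (z1 - P' z1), norm_nonneg (z1 - y)]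
  exact proj_unique hΩconv h1.1 h2.1 hmin h2.2
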